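/- Let ε > 0 and let (F_j) be a normalized block family with sup_j #F_j < ∞. Then there exist a strictly increasing sequence (n_j) of natural numbers and a decreasing sequence (ε_j) of positive reals such that: (i) for every j ∈ ℕ, every segment S of ⪯ with min S ≤ M(F_{n_j}) and every f ∈ G₁ with supp f = S, there exists at most one j' > j such that |f(x)| ≥ ε_j for some x ∈ F_{n_{j'}}; and (ii) Σ_{j=1}^∞ r(F_{n_j}) Σ_{i=j}^∞ (i+1) ε_i < ε. -/

import Mathlib

/-- A tree order on ℕ: a partial order compatible with the usual order, in which every
node has a finite, totally ordered set of predecessors. -/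
structure TreeOrder where
  le : ℕ → ℕ → Prop
  le_refl : ∀ n, le n n
  le_antisymm : ∀ {m n}, le m n → le n m → m = n
  le_trans : ∀ {a b c}, le a b → le b c → le a c
  compat : ∀ {m n}, le m n → m ≤ n
  pred_finite : ∀ n, {m | le m n}.Finite
  pred_chain : ∀ n, ∀ a, le a n → ∀ b, le b n → le a b ∨ le b a

/-- The tree is well-founded: there is no infinite ⪯-chain. -/
def TreeOrder.IsWellFoundedTree (T : TreeOrder) : Prop :=
  ¬ ∃ c : ℕ → ℕ, StrictMono c ∧ ∀ i, T.le (c i) (c (i + 1))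

/-- `s` is an immediate successor of `t`. -/
def TreeOrder.ImmSucc (T : TreeOrder) (t s : ℕ) : Prop :=
  T.le t s ∧ t ≠ s ∧ ∀ u, T.le t u → T.le u s → u = t ∨ u = s

/-- The tree is infinite branching: every non-maximal node has infinitely many
immediate successors. -/
def TreeOrder.InfiniteBranching (T : TreeOrder) : Prop :=
  ∀ t, (∃ s, T.le t s ∧ t ≠ s) → {s | T.ImmSucc t s}.Infinite

/-- Two nodes are incomparable. -/
def TreeOrder.Incomp (T : TreeOrder) (s t : ℕ) : Prop :=
  ¬ T.le s t ∧ ¬ T.le t s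

/-- The measure of a set `A` under a (finitely supported, positive) density `μ : ℕ → ℝ`. -/
noncomputable def mset (μ : ℕ → ℝ) (A : Set ℕ) : ℝ :=
  ∑' t, A.indicator μ t

/-- A segment of the tree order: a totally ordered, convex subset. -/
def TreeOrder.Segment (T : TreeOrder) (S : Set ℕ) : Prop :=
  (∀ s ∈ S, ∀ u ∈ S, T.le s u ∨ T.le u s) ∧
  (∀ s ∈ S, ∀ u ∈ S, ∀ t, T.le s t → T.le t u → t ∈ S)

/-- The set `G₁`: functionals `Σ_{i∈S} ε_i e*_i` with `S` a segment and `ε_i ∈ {-1, 1}`. -/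
def G1 (T : TreeOrder) : Set (ℕ → ℝ) :=
  {f | ∃ S : Set ℕ, T.Segment S ∧ (∀ i ∈ S, f i = 1 ∨ f i = -1) ∧ ∀ i ∉ S, f i = 0}

/-- The set `G_{1,p}`: functionals `Σ_{k=1}^m b_k f_k` with `f_k ∈ G₁` having pairwise
disjoint supports and `Σ_k |b_k|^q ≤ 1` (`q` the conjugate exponent of `p`). -/
def G1p (T : TreeOrder) (q : ℝ) : Set (ℕ → ℝ) :=
  {f | ∃ (m : ℕ) (b : Fin m → ℝ) (g : Fin m → ℕ → ℝ),
    (∀ k, g k ∈ G1 T) ∧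
    (∀ k l : Fin m, k ≠ l →
      Disjoint (Function.support (g k)) (Function.support (g l))) ∧
    (∑ k, |b k| ^ q) ≤ 1 ∧
    f = fun n => ∑ k, b k * g k n}

/-- The action `f(x) = Σ_n f n * x n` of a functional on a vector. -/
noncomputable def evalF (f x : ℕ → ℝ) : ℝ := ∑' n, f n * x n

/-- The norm `‖x‖ = sup {f(x) : f ∈ G_{1,p}}` of the space `JT^ξ_{1,p}`. -/
noncomputable def jtNorm (T : TreeOrder) (q : ℝ) (x : ℕ → ℝ) : ℝ :=
  sSup {r : ℝ | ∃ f ∈ G1p T q, r = evalF f x}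

/-- A normalized block family: a sequence of finite nonempty sets of finitely supported
normalized vectors, with the supports of members of `F j` entirely before those of the
members of `F (j+1)`. -/
def NormalizedBlockFamily (T : TreeOrder) (q : ℝ) (F : ℕ → Finset (ℕ → ℝ)) : Prop :=
  (∀ j, (F j).Nonempty) ∧
  (∀ j, ∀ x ∈ F j, (Function.support x).Finite) ∧
  (∀ j, ∀ x ∈ F j, jtNorm T q x = 1) ∧
  (∀ j, ∀ x ∈ F j, ∀ y ∈ F (j + 1),
    ∀ a ∈ Function.support x, ∀ b ∈ Function.support y, a < b)

/-- `M(F_j)`: the maximum of the supports of the members of `F j`. -/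
noncomputable def famMax (F : ℕ → Finset (ℕ → ℝ)) (j : ℕ) : ℕ :=
  sSup {n : ℕ | ∃ x ∈ F j, n ∈ Function.support x}

/-- `r(F_j)`: the number of integers in the interval `(M(F_{j-1}), M(F_j)]`
(with the convention that the maximum preceding the first set is `0`). -/
noncomputable def famR (F : ℕ → Finset (ℕ → ℝ)) : ℕ → ℕ
  | 0 => (Finset.Ioc 0 (famMax F 0)).card
  | (j + 1) => (Finset.Ioc (famMax F j) (famMax F (j + 1))).card

-- ### basic lemmas

lemma evalF_eq_sum {y : ℕ → ℝ} (hy : (Function.support y).Finite) (f : ℕ → ℝ) :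
    evalF f y = ∑ n ∈ hy.toFinset, f n * y n := by
  refine tsum_eq_sum ?_
  intro n hn
  have : y n = 0 := by
    by_contra h
    exact hn (hy.mem_toFinset.mpr h)
  simp [this]

lemma evalF_comb {y : ℕ → ℝ} (hy : (Function.support y).Finite) (m : ℕ)
    (b : Fin m → ℝ) (g : Fin m → ℕ → ℝ) :
    evalF (fun n => ∑ k, b k * g k n) y = ∑ k, b k * evalF (g k) y := by
  rw [evalF_eq_sum hy]
  have : ∀ k : Fin m, b k * evalF (g k) y = ∑ n ∈ hy.toFinset, b k * (g k n * y n) := by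
    intro k
    rw [evalF_eq_sum hy (g k), Finset.mul_sum]
  simp only [this]
  rw [Finset.sum_comm]
  congr 1; ext n
  rw [Finset.sum_mul]
  congr 1; ext k; ring

lemma zero_mem_G1p (T : TreeOrder) (q : ℝ) : (fun _ : ℕ => (0:ℝ)) ∈ G1p T q := by
  refine ⟨0, Fin.elim0, Fin.elim0, fun k => k.elim0, fun k => k.elim0, by simp, by
    funext n; simp⟩

lemma eval_le_one (T : TreeOrder) (q : ℝ) {y : ℕ → ℝ} (hy : jtNorm T q y = 1)
    {f : ℕ → ℝ} (hf : f ∈ G1p T q) : evalF f y ≤ 1 := by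
  have hmem : evalF f y ∈ {r : ℝ | ∃ f ∈ G1p T q, r = evalF f y} := ⟨f, hf, rfl⟩
  by_cases hb : BddAbove {r : ℝ | ∃ f ∈ G1p T q, r = evalF f y}
  · have := le_csSup hb hmem
    rwa [show sSup {r : ℝ | ∃ f ∈ G1p T q, r = evalF f y} = 1 from hy] at this
  · exfalso
    have := Real.sSup_of_not_bddAbove hb
    rw [jtNorm, this] at hy
    norm_num at hy

lemma support_nonempty (T : TreeOrder) (q : ℝ) {y : ℕ → ℝ} (hy : jtNorm T q y = 1) :
    (Function.support y).Nonempty := by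
  rw [Set.nonempty_iff_ne_empty]
  intro h
  have hy0 : y = 0 := Function.support_eq_empty_iff.mp h
  have : {r : ℝ | ∃ f ∈ G1p T q, r = evalF f y} = {0} := by
    ext r
    simp only [Set.mem_setOf_eq, Set.mem_singleton_iff]
    constructor
    · rintro ⟨f, _, rfl⟩
      simp [evalF, hy0]
    · rintro rfl
      exact ⟨_, zero_mem_G1p T q, by simp [evalF]⟩
  rw [jtNorm, this, csSup_singleton] at hy
  norm_num at hy

lemma seg_le_of_le {T : TreeOrder} {S : Set ℕ} (hS : T.Segment S) {m n : ℕ}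
    (hm : m ∈ S) (hn : n ∈ S) (h : m ≤ n) : T.le m n := by
  rcases hS.1 m hm n hn with h1 | h1
  · exact h1
  · have := T.compat h1
    have : m = n := le_antisymm h this
    subst this; exact T.le_refl m

lemma G1.support_subset {T : TreeOrder} {f : ℕ → ℝ} (hf : f ∈ G1 T) :
    ∃ S, T.Segment S ∧ Function.support f = S ∧ (∀ i ∈ S, f i = 1 ∨ f i = -1) := by
  obtain ⟨S, hS, hval, hzero⟩ := hf
  refine ⟨S, hS, ?_, hval⟩
  ext i
  simp only [Function.mem_support]
  constructor
  · intro h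
    by_contra hi
    exact h (hzero i hi)
  · intro h
    rcases hval i h with h1 | h1 <;> rw [h1] <;> norm_num

lemma G1.segment_support {T : TreeOrder} {f : ℕ → ℝ} (hf : f ∈ G1 T) :
    T.Segment (Function.support f) := by
  obtain ⟨S, hS, hsupp, _⟩ := G1.support_subset hf
  rwa [hsupp]

lemma hull_lemma (T : TreeOrder) {f y : ℕ → ℝ} (hf : f ∈ G1 T)
    (hyf : (Function.support y).Finite) (hne : evalF f y ≠ 0) :
    ∃ g c, g ∈ G1 T ∧ evalF g y = evalF f y ∧ c ∈ Function.support f ∧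
      c ∈ Function.support y ∧ ∀ n ∈ Function.support g, T.le c n := by
  obtain ⟨Sf, hSf, hsupp, hval⟩ := G1.support_subset hf
  set Ty : Finset ℕ := hyf.toFinset.filter (fun n => f n ≠ 0) with hTy
  have hTyne : Ty.Nonempty := by
    rw [evalF_eq_sum hyf] at hne
    obtain ⟨n, hn, hn0⟩ := Finset.exists_ne_zero_of_sum_ne_zero hne
    exact ⟨n, Finset.mem_filter.mpr ⟨hn, fun h => hn0 (by rw [h, zero_mul])⟩⟩
  set cm := Ty.min' hTyne with hcm
  set mx := Ty.max' hTyne with hmx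
  have hmemTy : ∀ n ∈ Ty, n ∈ Function.support f ∧ n ∈ Function.support y := by
    intro n hn
    rw [hTy, Finset.mem_filter, Set.Finite.mem_toFinset] at hn
    exact ⟨hn.2, hn.1⟩
  have hcmem := hmemTy cm (Ty.min'_mem hTyne)
  have hmxmem := hmemTy mx (Ty.max'_mem hTyne)
  have hcmS : cm ∈ Sf := by rw [← hsupp]; exact hcmem.1
  have hmxS : mx ∈ Sf := by rw [← hsupp]; exact hmxmem.1
  have hle : ∀ n ∈ Ty, T.le cm n ∧ T.le n mx := by
    intro n hn
    have hnS : n ∈ Sf := by rw [← hsupp]; exact (hmemTy n hn).1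
    exact ⟨seg_le_of_le hSf hcmS hnS (Ty.min'_le n hn),
      seg_le_of_le hSf hnS hmxS (Ty.le_max' n hn)⟩
  set H : Set ℕ := {n | T.le cm n ∧ T.le n mx} with hH
  have hHS : H ⊆ Sf := fun n hn => hSf.2 cm hcmS mx hmxS n hn.1 hn.2
  classical
  set g : ℕ → ℝ := fun n => if T.le cm n ∧ T.le n mx then f n else 0 with hg
  have hgH : ∀ n, n ∈ H → g n = f n := by
    intro n hn; rw [hg]; exact if_pos hn
  have hgnH : ∀ n, n ∉ H → g n = 0 := by
    intro n hn; rw [hg]; exact if_neg hn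
  have hgG1 : g ∈ G1 T := by
    refine ⟨H, ⟨?_, ?_⟩, ?_, hgnH⟩
    · intro a ha b hb
      exact T.pred_chain mx a ha.2 b hb.2
    · intro a ha b hb t h1 h2
      exact ⟨T.le_trans ha.1 h1, T.le_trans h2 hb.2⟩
    · intro i hi
      rw [hgH i hi]
      exact hval i (hHS hi)
  refine ⟨g, cm, hgG1, ?_, hcmem.1, hcmem.2, ?_⟩
  · rw [evalF_eq_sum hyf, evalF_eq_sum hyf]
    refine Finset.sum_congr rfl ?_
    intro n hn
    by_cases hnH : n ∈ H
    · rw [hgH n hnH]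
    · rw [hgnH n hnH, zero_mul]
      by_cases hfn : f n = 0
      · rw [hfn, zero_mul]
      · exfalso
        have hnTy : n ∈ Ty := Finset.mem_filter.mpr ⟨hn, hfn⟩
        exact hnH (hle n hnTy)
  · intro n hn
    have : n ∈ H := by
      by_contra h
      exact hn (hgnH n h)
    exact this.1

lemma lemmaB (T : TreeOrder) (p q : ℝ) (hp : 1 < p) (hpq : 1 / p + 1 / q = 1)
    {y : ℕ → ℝ} (hy1 : jtNorm T q y = 1) (hyf : (Function.support y).Finite)
    {δ : ℝ} (hδ : 0 < δ) (s : Finset ℕ) (g : ℕ → ℕ → ℝ)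
    (hg : ∀ k ∈ s, g k ∈ G1 T)
    (hdisj : ∀ k ∈ s, ∀ k' ∈ s, k ≠ k' →
      Disjoint (Function.support (g k)) (Function.support (g k')))
    (hval : ∀ k ∈ s, δ ≤ |evalF (g k) y|) :
    (s.card : ℝ) ≤ (1 / δ) ^ p := by
  have hp0 : (0:ℝ) < p := by linarith
  have h1p : 1 / p < 1 := by
    rw [div_lt_one hp0]; linarith
  have h1ppos : 0 < 1 / p := by positivity
  have hq1 : 0 < 1 / q := by linarith
  have hq0 : (0:ℝ) < q := by
    by_contra h
    push_neg at h
    have : 1 / q ≤ 0 := div_nonpos_of_nonneg_of_nonpos zero_le_one h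
    linarith
  rcases Nat.eq_zero_or_pos s.card with h0 | hpos
  · rw [h0]
    simp only [Nat.cast_zero]
    positivity
  have hr : (0:ℝ) < (s.card : ℝ) := by exact_mod_cast hpos
  set r := s.card with hrdef
  set A := (r : ℝ) with hA
  let E := s.equivFin
  set G : Fin r → ℕ → ℝ := fun i => g ((E.symm i : {x // x ∈ s}) : ℕ) with hG
  set c : ℝ := A ^ (-(1/q)) with hc
  have hcpos : 0 < c := Real.rpow_pos_of_pos hr _
  set b : Fin r → ℝ := fun i => (if 0 ≤ evalF (G i) y then (1:ℝ) else -1) * c with hb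
  have habs : ∀ i, |b i| = c := by
    intro i
    rw [hb]
    simp only []
    split <;> rw [abs_mul] <;> simp [abs_of_pos hcpos]
  have hcq : c ^ q = A⁻¹ := by
    rw [hc, ← Real.rpow_mul hr.le]
    rw [show -(1/q) * q = -1 by field_simp]
    exact Real.rpow_neg_one A
  have hsum_b : (∑ i : Fin r, |b i| ^ q) = 1 := by
    simp only [habs, hcq]
    rw [Finset.sum_const, Finset.card_univ, Fintype.card_fin, nsmul_eq_mul]
    field_simp
    exact hA.symm
  have hmemG : ∀ i, G i ∈ G1 T := fun i => hg _ (E.symm i).2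
  have hdisjG : ∀ i j : Fin r, i ≠ j →
      Disjoint (Function.support (G i)) (Function.support (G j)) := by
    intro i j hij
    refine hdisj _ (E.symm i).2 _ (E.symm j).2 ?_
    intro h
    exact hij (by
      have := Subtype.ext (p := fun x => x ∈ s) h
      exact E.symm.injective this)
  have hmem : (fun n => ∑ i, b i * G i n) ∈ G1p T q :=
    ⟨r, b, G, hmemG, hdisjG, le_of_eq hsum_b, rfl⟩
  have heval := eval_le_one T q hy1 hmem
  rw [evalF_comb hyf] at heval
  have hterm : ∀ i, b i * evalF (G i) y = c * |evalF (G i) y| := by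
    intro i
    rw [hb]
    simp only []
    by_cases h : 0 ≤ evalF (G i) y
    · rw [if_pos h, abs_of_nonneg h]; ring
    · rw [if_neg h, abs_of_neg (lt_of_not_ge h)]; ring
  have hvalG : ∀ i, δ ≤ |evalF (G i) y| := fun i => hval _ (E.symm i).2
  have hge : A * (c * δ) ≤ ∑ i, b i * evalF (G i) y := by
    simp only [hterm]
    calc A * (c * δ) = ∑ _i : Fin r, c * δ := by
          rw [Finset.sum_const, Finset.card_univ, Fintype.card_fin, nsmul_eq_mul, hA]
      _ ≤ ∑ i, c * |evalF (G i) y| := by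
          refine Finset.sum_le_sum ?_
          intro i _
          exact mul_le_mul_of_nonneg_left (hvalG i) hcpos.le
  have hrc : A * c = A ^ ((1:ℝ)/p) := by
    rw [hc]
    nth_rewrite 1 [show A = A ^ (1:ℝ) by rw [Real.rpow_one]]
    rw [← Real.rpow_add hr]
    congr 1
    linarith
  have hkey : δ * A ^ ((1:ℝ)/p) ≤ 1 := by
    have : A * (c * δ) = δ * (A * c) := by ring
    rw [this, hrc] at hge
    linarith
  have h2 : A ^ ((1:ℝ)/p) ≤ 1/δ := by
    rw [le_div_iff₀ hδ]
    calc A ^ ((1:ℝ)/p) * δ = δ * A ^ ((1:ℝ)/p) := by ring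
      _ ≤ 1 := hkey
  have h3 := Real.rpow_le_rpow (Real.rpow_nonneg hr.le _) h2 hp0.le
  rwa [← Real.rpow_mul hr.le, one_div, inv_mul_cancel₀ hp0.ne', Real.rpow_one] at h3

lemma block_lt (T : TreeOrder) (q : ℝ) (F : ℕ → Finset (ℕ → ℝ))
    (hF : NormalizedBlockFamily T q F) :
    ∀ j i, i < j → ∀ x ∈ F i, ∀ y ∈ F j, ∀ a ∈ Function.support x,
      ∀ b ∈ Function.support y, a < b := by
  intro j
  induction j with
  | zero => omega
  | succ j ih =>
    intro i hi x hx y hy a ha b hb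
    rcases Nat.lt_succ_iff_lt_or_eq.mp hi with h | h
    · obtain ⟨z, hz⟩ := hF.1 j
      obtain ⟨cc, hcc⟩ := support_nonempty T q (hF.2.2.1 j z hz)
      exact lt_trans (ih i h x hx z hz a ha cc hcc) (hF.2.2.2 j z hz y hy cc hcc b hb)
    · subst h
      exact hF.2.2.2 i x hx y hy a ha b hb

lemma region_finite (F : ℕ → Finset (ℕ → ℝ)) (k : ℕ)
    (hfin : ∀ x ∈ F k, (Function.support x).Finite) :
    {a : ℕ | ∃ x ∈ F k, a ∈ Function.support x}.Finite := by
  have heq : {a : ℕ | ∃ x ∈ F k, a ∈ Function.support x} =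
      ⋃ x ∈ (F k : Set (ℕ → ℝ)), Function.support x := by
    ext a; simp
  rw [heq]
  exact Set.Finite.biUnion (F k).finite_toSet (fun x hx => hfin x (by exact_mod_cast hx))

lemma inf_fiber {φ : ℕ → ℕ} {t : Set ℕ} (ht : t.Infinite) (hfin : (φ '' t).Finite) :
    ∃ w, (t ∩ φ ⁻¹' {w}).Infinite := by
  by_contra h
  push_neg at h
  have h' : ∀ w, (t ∩ φ ⁻¹' {w}).Finite := fun w => h w
  have hsub : t ⊆ ⋃ w ∈ φ '' t, (t ∩ φ ⁻¹' {w}) := by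
    intro x hx
    exact Set.mem_biUnion ⟨x, hx, rfl⟩ ⟨hx, rfl⟩
  exact ht ((hfin.biUnion (fun w _ => h' w)).subset hsub)

lemma ramsey_pairs (N : Set ℕ) (hN : N.Infinite) (c : ℕ → ℕ → Prop) :
    (∃ M, M ⊆ N ∧ M.Infinite ∧ ∀ a ∈ M, ∀ b ∈ M, a < b → c a b) ∨
    (∃ M, M ⊆ N ∧ M.Infinite ∧ ∀ a ∈ M, ∀ b ∈ M, a < b → ¬ c a b) := by
  classical
  have hstep : ∀ s : Set ℕ, s.Infinite → ∃ t : Set ℕ, t.Infinite ∧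
      t ⊆ s ∩ Set.Ioi (sInf s) ∧
      ((∀ m ∈ t, c (sInf s) m) ∨ (∀ m ∈ t, ¬ c (sInf s) m)) := by
    intro s hs
    set a := sInf s with hadef
    have h1 : (s ∩ Set.Ioi a).Infinite := by
      have heq : s ∩ Set.Ioi a = s \ Set.Iic a := by
        ext x
        simp only [Set.mem_inter_iff, Set.mem_Ioi, Set.mem_diff, Set.mem_Iic, not_le]
      rw [heq]
      exact hs.diff (Set.finite_Iic a)
    have h2 : (s ∩ Set.Ioi a) =
        {m | m ∈ s ∩ Set.Ioi a ∧ c a m} ∪ {m | m ∈ s ∩ Set.Ioi a ∧ ¬ c a m} := by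
      ext x
      by_cases h : c a x <;> simp [h]
    rw [h2] at h1
    rcases Set.infinite_union.mp h1 with h | h
    · exact ⟨_, h, fun m hm => hm.1, Or.inl (fun m hm => hm.2)⟩
    · exact ⟨_, h, fun m hm => hm.1, Or.inr (fun m hm => hm.2)⟩
  choose step hstep1 hstep2 hstep3 using hstep
  let A : ℕ → {s : Set ℕ // s.Infinite} := fun i =>
    Nat.rec ⟨N, hN⟩ (fun _ p => ⟨step p.1 p.2, hstep1 p.1 p.2⟩) i
  have hAsucc : ∀ i, (A (i+1)).1 = step (A i).1 (A i).2 := fun i => rfl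
  set a : ℕ → ℕ := fun i => sInf (A i).1 with ha
  have hmem : ∀ i, a i ∈ (A i).1 := fun i => Nat.sInf_mem (A i).2.nonempty
  have hsub : ∀ i, (A (i+1)).1 ⊆ (A i).1 ∩ Set.Ioi (a i) := fun i => hstep2 _ _
  have hAmono : ∀ i, (A (i+1)).1 ⊆ (A i).1 := fun i x hx => (hsub i hx).1
  have hchain : ∀ i k, i ≤ k → (A k).1 ⊆ (A i).1 := by
    intro i k hik
    induction k with
    | zero =>
      have : i = 0 := by omega
      subst this; exact subset_rfl
    | succ k ih =>
      rcases Nat.le_succ_iff_eq_or_le.mp hik with h | h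
      · subst h; exact subset_rfl
      · exact fun x hx => ih h (hAmono k hx)
  have hstrict : StrictMono a :=
    strictMono_nat_of_lt_succ (fun i => (hsub i (hmem (i+1))).2)
  have hAN : ∀ i, (A i).1 ⊆ N := fun i => hchain 0 i (Nat.zero_le i)
  have hkey : ∀ i, (∀ m ∈ (A (i+1)).1, c (a i) m) ∨ (∀ m ∈ (A (i+1)).1, ¬ c (a i) m) := by
    intro i
    have := hstep3 (A i).1 (A i).2
    rw [← hAsucc i] at this
    exact this
  set P := {i : ℕ | ∀ m ∈ (A (i+1)).1, c (a i) m} with hP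
  have hPor : P.Infinite ∨ {i | i ∉ P}.Infinite := by
    by_contra h
    push_neg at h
    have h1 : P.Finite := h.1
    have h2 : {i | i ∉ P}.Finite := h.2
    have : (Set.univ : Set ℕ).Finite := by
      have : (Set.univ : Set ℕ) = P ∪ {i | i ∉ P} := by
        ext i; by_cases h : i ∈ P <;> simp [h]
      rw [this]
      exact h1.union h2
    exact Set.infinite_univ this
  have hmono_mem : ∀ i k, i < k → a k ∈ (A (i+1)).1 := by
    intro i k hik
    exact hchain (i+1) k hik (hmem k)
  rcases hPor with hinf | hinf
  · left
    refine ⟨a '' P, ?_, hinf.image (hstrict.injective.injOn), ?_⟩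
    · rintro _ ⟨i, _, rfl⟩
      exact hAN i (hmem i)
    · rintro _ ⟨i, hi, rfl⟩ _ ⟨k, hk, rfl⟩ hlt
      have hik : i < k := hstrict.lt_iff_lt.mp hlt
      exact hi _ (hmono_mem i k hik)
  · right
    refine ⟨a '' {i | i ∉ P}, ?_, hinf.image (hstrict.injective.injOn), ?_⟩
    · rintro _ ⟨i, _, rfl⟩
      exact hAN i (hmem i)
    · rintro _ ⟨i, hi, rfl⟩ _ ⟨k, hk, rfl⟩ hlt
      have hik : i < k := hstrict.lt_iff_lt.mp hlt
      have := (hkey i).resolve_left hi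
      exact this _ (hmono_mem i k hik)

def badPair (T : TreeOrder) (F : ℕ → Finset (ℕ → ℝ)) (δ : ℝ) (m m' : ℕ) : Prop :=
  ∃ f ∈ G1 T, (∃ x ∈ F m, δ ≤ |evalF f x|) ∧ (∃ x ∈ F m', δ ≤ |evalF f x|)

lemma badPair_symm {T : TreeOrder} {F : ℕ → Finset (ℕ → ℝ)} {δ : ℝ} {m m' : ℕ}
    (h : badPair T F δ m m') : badPair T F δ m' m := by
  obtain ⟨f, hf, h1, h2⟩ := h
  exact ⟨f, hf, h2, h1⟩

lemma claimA (T : TreeOrder) (hwf : T.IsWellFoundedTree)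
    (p q : ℝ) (hp : 1 < p) (hpq : 1 / p + 1 / q = 1)
    (F : ℕ → Finset (ℕ → ℝ)) (hF : NormalizedBlockFamily T q F)
    (D : ℕ) (hD : ∀ j, (F j).card ≤ D)
    (δ : ℝ) (hδ : 0 < δ)
    (N : Set ℕ) (hN : N.Infinite)
    (hbad : ∀ m ∈ N, ∀ m' ∈ N, m < m' → badPair T F δ m m') : False := by
  classical
  set K : ℕ := ⌊(1/δ) ^ p⌋₊ with hK
  have hNset : {x | x ∈ N}.Infinite := hN
  set e : ℕ → ℕ := Nat.nth (· ∈ N) with he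
  have hemem : ∀ k, e k ∈ N := fun k => Nat.nth_mem_of_infinite hNset k
  have hemono : StrictMono e := Nat.nth_strictMono hNset
  -- per-pair witnesses
  have Hdata : ∀ k l : ℕ, k < l → ∃ (g : ℕ → ℝ) (A C : ℕ) (Y : ℕ → ℝ),
      g ∈ G1 T ∧ Y ∈ F (e l) ∧ δ ≤ |evalF g Y| ∧ C ∈ Function.support Y ∧
      (∃ x ∈ F (e k), A ∈ Function.support x) ∧
      (∀ n ∈ Function.support g, T.le C n) ∧ T.le A C := by
    intro k l hkl
    obtain ⟨f, hf, ⟨x, hx, hvx⟩, ⟨y, hy, hvy⟩⟩ :=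
      hbad (e k) (hemem k) (e l) (hemem l) (hemono hkl)
    have hxf : (Function.support x).Finite := hF.2.1 _ x hx
    have hyf : (Function.support y).Finite := hF.2.1 _ y hy
    have hnex : evalF f x ≠ 0 := by
      intro h; rw [h] at hvx; simp at hvx; linarith
    have hney : evalF f y ≠ 0 := by
      intro h; rw [h] at hvy; simp at hvy; linarith
    have hA : ∃ A, A ∈ Function.support f ∧ A ∈ Function.support x := by
      rw [evalF_eq_sum hxf] at hnex
      obtain ⟨n, hn, hn0⟩ := Finset.exists_ne_zero_of_sum_ne_zero hnex
      rcases mul_ne_zero_iff.mp hn0 with ⟨hn1, hn2⟩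
      exact ⟨n, hn1, hn2⟩
    obtain ⟨A, hAf, hAx⟩ := hA
    obtain ⟨g, C, hgG1, hgeval, hCf, hCy, hgup⟩ := hull_lemma T hf hyf hney
    have hACn : A < C :=
      block_lt T q F hF (e l) (e k) (hemono hkl) x hx y hy A hAx C hCy
    refine ⟨g, A, C, y, hgG1, hy, by rw [hgeval]; exact hvy, hCy, ⟨x, hx, hAx⟩, hgup, ?_⟩
    exact seg_le_of_le (G1.segment_support hf) hAf hCf hACn.le
  choose gg aa cc yy h1 h2 h3 h4 h5 h6 h7 using Hdata
  -- total (proof-free) versions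
  set gv : ℕ → ℕ → ℕ → ℝ := fun k l => if h : k < l then gg k l h else fun _ => 0 with hgv
  set av : ℕ → ℕ → ℕ := fun k l => if h : k < l then aa k l h else 0 with hav
  set cv : ℕ → ℕ → ℕ := fun k l => if h : k < l then cc k l h else 0 with hcv
  set yv : ℕ → ℕ → ℕ → ℝ := fun k l => if h : k < l then yy k l h else fun _ => 0 with hyv
  -- window lemma: any big finset below l contains a pair with comparable c's
  have window : ∀ l : ℕ, ∀ s : Finset ℕ, (∀ k ∈ s, k < l) → D * K < s.card →
      ∃ k ∈ s, ∃ k' ∈ s, k ≠ k' ∧ (T.le (cv k l) (cv k' l) ∨ T.le (cv k' l) (cv k l)) := by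
    intro l s hs hcard
    by_contra hcon
    push_neg at hcon
    have hmaps : ∀ k ∈ s, yv k l ∈ F (e l) := by
      intro k hk
      have hkl : k < l := hs k hk
      rw [hyv]; simp only [dif_pos hkl]
      exact h2 k l hkl
    have hcard2 : (F (e l)).card * K < s.card :=
      lt_of_le_of_lt (Nat.mul_le_mul_right K (hD (e l))) hcard
    obtain ⟨y₀, hy₀, hfib⟩ :=
      Finset.exists_lt_card_fiber_of_mul_lt_card_of_maps_to hmaps hcard2
    set fib := s.filter (fun k => yv k l = y₀) with hfib'
    have hfsub : ∀ k ∈ fib, k ∈ s := fun k hk => (Finset.mem_filter.mp hk).1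
    have hB := lemmaB T p q hp hpq (hF.2.2.1 (e l) y₀ hy₀) (hF.2.1 (e l) y₀ hy₀)
      hδ fib (fun k => gv k l) ?_ ?_ ?_
    · have : fib.card ≤ K := Nat.le_floor hB
      omega
    · intro k hk
      have hkl : k < l := hs k (hfsub k hk)
      rw [hgv]; simp only [dif_pos hkl]
      exact h1 k l hkl
    · intro k hk k' hk' hne
      have hkl : k < l := hs k (hfsub k hk)
      have hkl' : k' < l := hs k' (hfsub k' hk')
      rw [Set.disjoint_left]
      intro n hn hn'
      rw [hgv] at hn hn'
      simp only [dif_pos hkl] at hn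
      simp only [dif_pos hkl'] at hn'
      have hc1 : T.le (cc k l hkl) n := h6 k l hkl n hn
      have hc2 : T.le (cc k' l hkl') n := h6 k' l hkl' n hn'
      have hcmp := T.pred_chain n _ hc1 _ hc2
      have hcon' := hcon k (hfsub k hk) k' (hfsub k' hk') hne
      rw [hcv] at hcon'
      simp only [dif_pos hkl, dif_pos hkl'] at hcon'
      rcases hcmp with h | h
      · exact hcon'.1 h
      · exact hcon'.2 h
    · intro k hk
      have hkl : k < l := hs k (hfsub k hk)
      have hyy : yv k l = y₀ := (Finset.mem_filter.mp hk).2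
      rw [hgv]; simp only [dif_pos hkl]
      have := h3 k l hkl
      rw [hyv] at hyy; simp only [dif_pos hkl] at hyy
      rwa [hyy] at this
  -- diagonalization: stabilize the a-witness
  have hstepL : ∀ k : ℕ, ∀ s : Set ℕ, s.Infinite → ∃ (w : ℕ) (t : Set ℕ), t.Infinite ∧
      t ⊆ s ∩ Set.Ioi k ∧ (∀ l ∈ t, av k l = w) ∧
      (∃ x ∈ F (e k), w ∈ Function.support x) := by
    intro k s hs
    have hI : (s ∩ Set.Ioi k).Infinite := by
      have heq : s ∩ Set.Ioi k = s \ Set.Iic k := by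
        ext x
        simp only [Set.mem_inter_iff, Set.mem_Ioi, Set.mem_diff, Set.mem_Iic, not_le]
      rw [heq]
      exact hs.diff (Set.finite_Iic k)
    have hfin : (av k '' (s ∩ Set.Ioi k)).Finite := by
      refine Set.Finite.subset (region_finite F (e k) (fun x hx => hF.2.1 _ x hx)) ?_
      rintro _ ⟨l, hl, rfl⟩
      have hkl : k < l := hl.2
      rw [hav]; simp only [dif_pos hkl]
      exact h5 k l hkl
    obtain ⟨w, hw⟩ := inf_fiber hI hfin
    refine ⟨w, _, hw, fun l hl => hl.1, ?_, ?_⟩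
    · intro l hl
      have := hl.2
      simpa using this
    · obtain ⟨l, hl⟩ := hw.nonempty
      have hkl : k < l := hl.1.2
      have hval : av k l = w := by simpa using hl.2
      rw [hav] at hval; simp only [dif_pos hkl] at hval
      rw [← hval]
      exact h5 k l hkl
  choose wstep tstep htinf htsub hconst hwreg using hstepL
  let L : ℕ → {s : Set ℕ // s.Infinite} := fun k =>
    Nat.rec ⟨Set.univ, Set.infinite_univ⟩
      (fun k p => ⟨tstep k p.1 p.2, htinf k p.1 p.2⟩) k
  set w : ℕ → ℕ := fun k => wstep k (L k).1 (L k).2 with hwdef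
  have hLsucc : ∀ k, (L (k+1)).1 = tstep k (L k).1 (L k).2 := fun k => rfl
  have hLsub : ∀ k, (L (k+1)).1 ⊆ (L k).1 ∩ Set.Ioi k := fun k => htsub k _ _
  have hLchain : ∀ i k, i ≤ k → (L k).1 ⊆ (L i).1 := by
    intro i k hik
    induction k with
    | zero =>
      have : i = 0 := by omega
      subst this; exact subset_rfl
    | succ k ih =>
      rcases Nat.le_succ_iff_eq_or_le.mp hik with h | h
      · subst h; exact subset_rfl
      · exact fun x hx => ih h ((hLsub k hx).1)
  have hLconst : ∀ k, ∀ l ∈ (L (k+1)).1, av k l = w k := fun k => hconst k _ _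
  have hLgt : ∀ k, ∀ l ∈ (L (k+1)).1, k < l := fun k l hl => (hLsub k hl).2
  have hwreg' : ∀ k, ∃ x ∈ F (e k), w k ∈ Function.support x := fun k => hwreg k _ _
  -- w is strictly monotone
  have hwmono : ∀ k k', k < k' → w k < w k' := by
    intro k k' hkk
    obtain ⟨x, hx, hwx⟩ := hwreg' k
    obtain ⟨x', hx', hwx'⟩ := hwreg' k'
    exact block_lt T q F hF (e k') (e k) (hemono hkk) x hx x' hx' _ hwx _ hwx'
  -- every big finset of indices contains a comparable pair of w's
  have hedge : ∀ s : Finset ℕ, D * K < s.card → ∃ k ∈ s, ∃ k' ∈ s, k ≠ k' ∧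
      (T.le (w k) (w k') ∨ T.le (w k') (w k)) := by
    intro s hcard
    have hsne : s.Nonempty := by
      rw [← Finset.card_pos]; omega
    set κ := s.max' hsne + 1 with hκ
    obtain ⟨l, hl⟩ := (L κ).2.nonempty
    have hlin : ∀ k ∈ s, l ∈ (L (k+1)).1 := by
      intro k hk
      have hkκ : k + 1 ≤ κ := by
        have := s.le_max' k hk; omega
      exact hLchain (k+1) κ hkκ hl
    have hkl : ∀ k ∈ s, k < l := fun k hk => hLgt k l (hlin k hk)
    obtain ⟨k, hk, k', hk', hne, hcomp⟩ := window l s hkl hcard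
    refine ⟨k, hk, k', hk', hne, ?_⟩
    have hkl1 : k < l := hkl k hk
    have hkl2 : k' < l := hkl k' hk'
    have hwk : aa k l hkl1 = w k := by
      have := hLconst k l (hlin k hk)
      rw [hav] at this; simpa only [dif_pos hkl1] using this
    have hwk' : aa k' l hkl2 = w k' := by
      have := hLconst k' l (hlin k' hk')
      rw [hav] at this; simpa only [dif_pos hkl2] using this
    rw [hcv] at hcomp
    simp only [dif_pos hkl1, dif_pos hkl2] at hcomp
    have ha1 : T.le (aa k l hkl1) (cc k l hkl1) := h7 k l hkl1
    have ha2 : T.le (aa k' l hkl2) (cc k' l hkl2) := h7 k' l hkl2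
    rw [hwk] at ha1
    rw [hwk'] at ha2
    rcases hcomp with hcl | hcl
    · exact T.pred_chain (cc k' l hkl2) _ (T.le_trans ha1 hcl) _ ha2
    · exact T.pred_chain (cc k l hkl1) _ ha1 _ (T.le_trans ha2 hcl)
  -- Ramsey on comparability of (w k)
  rcases ramsey_pairs Set.univ Set.infinite_univ
      (fun k k' => T.le (w k) (w k') ∨ T.le (w k') (w k)) with
    ⟨M, _, hMinf, hMcomp⟩ | ⟨M, _, hMinf, hMinc⟩
  · -- infinite chain: contradiction with well-foundedness
    have hMset : {x | x ∈ M}.Infinite := hMinf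
    set m : ℕ → ℕ := Nat.nth (· ∈ M) with hm
    have hmmem : ∀ i, m i ∈ M := fun i => Nat.nth_mem_of_infinite hMset i
    have hmmono : StrictMono m := Nat.nth_strictMono hMset
    refine hwf ⟨fun i => w (m i), ?_, ?_⟩
    · intro i j hij
      exact hwmono _ _ (hmmono hij)
    · intro i
      have hlt : m i < m (i+1) := hmmono (Nat.lt_succ_self i)
      rcases hMcomp (m i) (hmmem i) (m (i+1)) (hmmem (i+1)) hlt with h | h
      · exact h
      · exfalso
        have := T.compat h
        have := hwmono _ _ hlt
        omega
  · -- infinite independent set: contradicted by hedge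
    obtain ⟨t, htM, htcard⟩ := hMinf.exists_subset_card_eq (D * K + 1)
    obtain ⟨k, hk, k', hk', hne, hcomp⟩ := hedge t (by omega)
    rcases Nat.lt_or_ge k k' with hlt | hge
    · exact hMinc k (htM hk) k' (htM hk') hlt hcomp
    · have hlt : k' < k := by omega
      exact hMinc k' (htM hk') k (htM hk) hlt (hcomp.symm)

lemma mainLemma (T : TreeOrder) (hwf : T.IsWellFoundedTree)
    (p q : ℝ) (hp : 1 < p) (hpq : 1 / p + 1 / q = 1)
    (F : ℕ → Finset (ℕ → ℝ)) (hF : NormalizedBlockFamily T q F)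
    (D : ℕ) (hD : ∀ j, (F j).card ≤ D)
    (N : Set ℕ) (hN : N.Infinite) (δ : ℝ) (hδ : 0 < δ) :
    ∃ N', N' ⊆ N ∧ N'.Infinite ∧
      ∀ m ∈ N', ∀ m' ∈ N', m ≠ m' → ¬ badPair T F δ m m' := by
  rcases ramsey_pairs N hN (badPair T F δ) with
    ⟨M, hMN, hMinf, hMall⟩ | ⟨M, hMN, hMinf, hMnone⟩
  · exact absurd (claimA T hwf p q hp hpq F hF D hD δ hδ M hMinf hMall) (fun h => h)
  · refine ⟨M, hMN, hMinf, ?_⟩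
    intro m hm m' hm' hne hbp
    rcases Nat.lt_or_ge m m' with h | h
    · exact hMnone m hm m' hm' h hbp
    · have h' : m' < m := by omega
      exact hMnone m' hm' m hm h' (badPair_symm hbp)

lemma inter_Ioi_infinite {s : Set ℕ} (hs : s.Infinite) (k : ℕ) :
    (s ∩ Set.Ioi k).Infinite := by
  have heq : s ∩ Set.Ioi k = s \ Set.Iic k := by
    ext x
    simp only [Set.mem_inter_iff, Set.mem_Ioi, Set.mem_diff, Set.mem_Iic, not_le]
  rw [heq]
  exact hs.diff (Set.finite_Iic k)


/-- for every `ε > 0` and every normalized block family `(F j)` with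
uniformly bounded cardinalities, there exist a strictly increasing sequence `(n j)` of
naturals and a decreasing sequence `(εs j)` of positive reals such that:
(i) for every `j`, every segment `S` with `min S ≤ M(F_{n_j})` and every `f ∈ G₁` with
`supp f = S`, there is at most one `j' > j` such that `|f(x)| ≥ εs j` for some
`x ∈ F_{n_{j'}}`; and (ii) `Σ_j r(F_{n_j}) Σ_{i=j}^∞ (i+1) εs i < ε` (all the series
involved being convergent). -/
theorem statement12 (T : TreeOrder) (hwf : T.IsWellFoundedTree)
    (p q : ℝ) (hp : 1 < p) (hpq : 1 / p + 1 / q = 1)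
    (F : ℕ → Finset (ℕ → ℝ)) (hF : NormalizedBlockFamily T q F)
    (D : ℕ) (hD : ∀ j, (F j).card ≤ D)
    (ε : ℝ) (hε : 0 < ε) :
    ∃ n : ℕ → ℕ, StrictMono n ∧
    ∃ εs : ℕ → ℝ, (∀ j, 0 < εs j) ∧ (∀ j, εs (j + 1) ≤ εs j) ∧
      (∀ j : ℕ, ∀ S : Set ℕ, T.Segment S → (∃ i ∈ S, i ≤ famMax F (n j)) →
        ∀ f ∈ G1 T, Function.support f = S →
        ∀ j₁ j₂ : ℕ, j < j₁ → j < j₂ →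
          (∃ x ∈ F (n j₁), εs j ≤ |evalF f x|) →
          (∃ x ∈ F (n j₂), εs j ≤ |evalF f x|) → j₁ = j₂) ∧
      Summable (fun i : ℕ => ((i : ℝ) + 1) * εs i) ∧
      Summable (fun j : ℕ =>
        (famR F (n j) : ℝ) * ∑' k : ℕ, (((j + k : ℕ) : ℝ) + 1) * εs (j + k)) ∧
      (∑' j : ℕ,
        (famR F (n j) : ℝ) * ∑' k : ℕ, (((j + k : ℕ) : ℝ) + 1) * εs (j + k)) < ε := by
  classical
  have refine0 : ∀ (N : Set ℕ), N.Infinite → ∀ δ : ℝ, 0 < δ → ∃ N', N' ⊆ N ∧ N'.Infinite ∧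
      ∀ m ∈ N', ∀ m' ∈ N', m ≠ m' → ¬ badPair T F δ m m' :=
    fun N hN δ hδ => mainLemma T hwf p q hp hpq F hF D hD N hN δ hδ
  choose rf hrf1 hrf2 hrf3 using refine0
  set c : ℝ := (4:ℝ)⁻¹ with hc
  have hc0 : 0 < c := by norm_num [hc]
  have hc1 : c < 1 := by norm_num [hc]
  let dl : ℕ → ℕ → ℝ := fun j Q => ε * c ^ (j+1) / (((j:ℝ)+1) * ((Q:ℝ)+1))
  have hdlpos : ∀ j Q, 0 < dl j Q := by
    intro j Q
    have h1 : (0:ℝ) < c ^ (j+1) := pow_pos hc0 _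
    have h2 : (0:ℝ) < ((j:ℝ)+1) * ((Q:ℝ)+1) := by positivity
    exact div_pos (mul_pos hε h1) h2
  let step : ℕ → ({s : Set ℕ // s.Infinite} × ℕ) → ({s : Set ℕ // s.Infinite} × ℕ) :=
    fun j x =>
      (⟨rf (x.1.1 ∩ Set.Ioi (sInf x.1.1)) (inter_Ioi_infinite x.1.2 _)
          (dl j (x.2 + famR F (sInf x.1.1))) (hdlpos _ _),
        hrf2 _ _ _ _⟩, x.2 + famR F (sInf x.1.1))
  let st : ℕ → ({s : Set ℕ // s.Infinite} × ℕ) := fun j =>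
    Nat.rec (⟨⟨Set.univ, Set.infinite_univ⟩, 0⟩) (fun j x => step j x) j
  let n : ℕ → ℕ := fun j => sInf (st j).1.1
  let Qf : ℕ → ℕ := fun j => (st j).2 + famR F (n j)
  let εs : ℕ → ℝ := fun j => dl j (Qf j)
  have hQsucc : ∀ j, (st (j+1)).2 = Qf j := fun j => rfl
  have hNsub : ∀ j, (st (j+1)).1.1 ⊆ (st j).1.1 ∩ Set.Ioi (n j) := fun j => hrf1 _ _ _ _
  have hfree : ∀ j, ∀ m ∈ (st (j+1)).1.1, ∀ m' ∈ (st (j+1)).1.1, m ≠ m' →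
      ¬ badPair T F (εs j) m m' := fun j => hrf3 _ _ _ _
  have hnmem : ∀ j, n j ∈ (st j).1.1 := fun j => Nat.sInf_mem (st j).1.2.nonempty
  have hchain : ∀ i k, i ≤ k → (st k).1.1 ⊆ (st i).1.1 := by
    intro i k hik
    induction k with
    | zero =>
      have : i = 0 := by omega
      subst this; exact subset_rfl
    | succ k ih =>
      rcases Nat.le_succ_iff_eq_or_le.mp hik with h | h
      · subst h; exact subset_rfl
      · exact fun x hx => ih h ((hNsub k hx).1)
  have hnmono : StrictMono n :=
    strictMono_nat_of_lt_succ (fun j => (hNsub j (hnmem (j+1))).2)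
  have hmem_tail : ∀ j j', j < j' → n j' ∈ (st (j+1)).1.1 :=
    fun j j' hjj => hchain (j+1) j' hjj (hnmem j')
  have hεpos : ∀ j, 0 < εs j := fun j => hdlpos _ _
  have hQmono : ∀ i j, i ≤ j → Qf i ≤ Qf j := by
    intro i j hij
    induction j with
    | zero =>
      have : i = 0 := by omega
      subst this; exact le_rfl
    | succ j ih =>
      rcases Nat.le_succ_iff_eq_or_le.mp hij with h | h
      · subst h; exact le_rfl
      · refine le_trans (ih h) ?_
        show Qf j ≤ (st (j+1)).2 + famR F (n (j+1))
        rw [hQsucc j]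
        exact Nat.le_add_right _ _
  have hεdec : ∀ j, εs (j + 1) ≤ εs j := by
    intro j
    show dl (j+1) (Qf (j+1)) ≤ dl j (Qf j)
    have h1 : ε * c ^ (j+2) ≤ ε * c ^ (j+1) := by
      apply mul_le_mul_of_nonneg_left _ hε.le
      calc c ^ (j+2) = c ^ (j+1) * c := by ring
        _ ≤ c ^ (j+1) * 1 := by
            exact mul_le_mul_of_nonneg_left hc1.le (pow_pos hc0 _).le
        _ = c ^ (j+1) := mul_one _
    have h2 : ((j:ℝ)+1) * ((Qf j:ℝ)+1) ≤ (((j+1:ℕ):ℝ)+1) * ((Qf (j+1):ℝ)+1) := by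
      have hq : (Qf j : ℝ) ≤ (Qf (j+1) : ℝ) := by
        exact_mod_cast hQmono j (j+1) (Nat.le_succ j)
      have hj : ((j:ℝ)+1) ≤ ((j+1:ℕ):ℝ)+1 := by
        push_cast; linarith
      have hq' : ((Qf j:ℝ)+1) ≤ ((Qf (j+1):ℝ)+1) := by linarith
      have h0a : (0:ℝ) ≤ (Qf j:ℝ)+1 := by positivity
      have h0b : (0:ℝ) ≤ ((j+1:ℕ):ℝ)+1 := by positivity
      exact mul_le_mul hj hq' h0a h0b
    have h3 : (0:ℝ) < ((j:ℝ)+1) * ((Qf j:ℝ)+1) := by positivity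
    exact div_le_div₀ (by positivity) h1 h3 h2
  -- condition (i)
  have hcondi : ∀ j : ℕ, ∀ S : Set ℕ, T.Segment S → (∃ i ∈ S, i ≤ famMax F (n j)) →
      ∀ f ∈ G1 T, Function.support f = S →
      ∀ j₁ j₂ : ℕ, j < j₁ → j < j₂ →
        (∃ x ∈ F (n j₁), εs j ≤ |evalF f x|) →
        (∃ x ∈ F (n j₂), εs j ≤ |evalF f x|) → j₁ = j₂ := by
    intro j S _ _ f hf _ j₁ j₂ hj₁ hj₂ hw₁ hw₂
    by_contra hne
    have hne' : n j₁ ≠ n j₂ := fun h => hne (hnmono.injective h)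
    exact hfree j (n j₁) (hmem_tail j j₁ hj₁) (n j₂) (hmem_tail j j₂ hj₂) hne'
      ⟨f, hf, hw₁, hw₂⟩
  -- summability and sums
  have keyb : ∀ i : ℕ, ((i:ℝ)+1) * εs i = ε * c ^ (i+1) / ((Qf i : ℝ)+1) := by
    intro i
    show ((i:ℝ)+1) * (ε * c ^ (i+1) / (((i:ℝ)+1) * ((Qf i:ℝ)+1))) = _
    have hi : ((i:ℝ)+1) ≠ 0 := by positivity
    have hQ : ((Qf i:ℝ)+1) ≠ 0 := by positivity
    field_simp
  have hRQ : ∀ j i, j ≤ i → (famR F (n j) : ℝ) ≤ (Qf i : ℝ) := by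
    intro j i hji
    have h1 : famR F (n j) ≤ Qf j := Nat.le_add_left _ _
    have h2 := hQmono j i hji
    exact_mod_cast le_trans h1 h2
  have hterm_le : ∀ j k : ℕ,
      (((j + k : ℕ) : ℝ) + 1) * εs (j + k) ≤
        (ε * c ^ (j+1) / ((famR F (n j) : ℝ) + 1)) * c ^ k := by
    intro j k
    rw [keyb (j+k)]
    have h1 : (famR F (n j) : ℝ) + 1 ≤ (Qf (j+k) : ℝ) + 1 := by
      have := hRQ j (j+k) (Nat.le_add_right _ _)
      linarith
    have h2 : ε * c ^ (j+k+1) / ((Qf (j+k):ℝ)+1) ≤ ε * c ^ (j+k+1) / ((famR F (n j):ℝ)+1) := by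
      apply div_le_div_of_nonneg_left _ (by positivity) h1
      positivity
    calc ε * c ^ (j+k+1) / ((Qf (j+k):ℝ)+1) ≤ ε * c ^ (j+k+1) / ((famR F (n j):ℝ)+1) := h2
      _ = (ε * c ^ (j+1) / ((famR F (n j):ℝ)+1)) * c ^ k := by
          rw [show j + k + 1 = (j+1) + k by ring, pow_add]
          ring
  have hgeo : Summable (fun k : ℕ => c ^ k) := summable_geometric_of_lt_one hc0.le hc1
  have hsum_tail : ∀ j : ℕ, Summable (fun k : ℕ => (((j + k : ℕ) : ℝ) + 1) * εs (j + k)) := by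
    intro j
    refine Summable.of_nonneg_of_le (fun k => ?_) (fun k => hterm_le j k)
      (hgeo.mul_left _)
    have := hεpos (j+k)
    positivity
  have htail_le : ∀ j : ℕ,
      (∑' k : ℕ, (((j + k : ℕ) : ℝ) + 1) * εs (j + k)) ≤
        (ε * c ^ (j+1) / ((famR F (n j) : ℝ) + 1)) * (1 - c)⁻¹ := by
    intro j
    calc (∑' k : ℕ, (((j + k : ℕ) : ℝ) + 1) * εs (j + k))
        ≤ ∑' k : ℕ, (ε * c ^ (j+1) / ((famR F (n j) : ℝ) + 1)) * c ^ k :=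
          Summable.tsum_le_tsum (hterm_le j) (hsum_tail j) (hgeo.mul_left _)
      _ = (ε * c ^ (j+1) / ((famR F (n j) : ℝ) + 1)) * ∑' k : ℕ, c ^ k := tsum_mul_left
      _ = (ε * c ^ (j+1) / ((famR F (n j) : ℝ) + 1)) * (1 - c)⁻¹ := by
          rw [tsum_geometric_of_lt_one hc0.le hc1]
  have htail_nonneg : ∀ j : ℕ, 0 ≤ ∑' k : ℕ, (((j + k : ℕ) : ℝ) + 1) * εs (j + k) := by
    intro j
    refine tsum_nonneg (fun k => ?_)
    have := hεpos (j+k)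
    positivity
  have houter_le : ∀ j : ℕ,
      (famR F (n j) : ℝ) * (∑' k : ℕ, (((j + k : ℕ) : ℝ) + 1) * εs (j + k)) ≤
        (ε * (1-c)⁻¹) * c ^ (j+1) := by
    intro j
    set R : ℝ := (famR F (n j) : ℝ) with hR
    have hR0 : 0 ≤ R := by positivity
    calc R * (∑' k : ℕ, (((j + k : ℕ) : ℝ) + 1) * εs (j + k))
        ≤ R * ((ε * c ^ (j+1) / (R + 1)) * (1 - c)⁻¹) :=
          mul_le_mul_of_nonneg_left (htail_le j) hR0
      _ = (ε * (1-c)⁻¹) * c ^ (j+1) * (R / (R+1)) := by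
          field_simp
      _ ≤ (ε * (1-c)⁻¹) * c ^ (j+1) * 1 := by
          apply mul_le_mul_of_nonneg_left _ (by positivity)
          rw [div_le_one (by positivity)]
          linarith
      _ = (ε * (1-c)⁻¹) * c ^ (j+1) := mul_one _
  have houter_nonneg : ∀ j : ℕ,
      0 ≤ (famR F (n j) : ℝ) * (∑' k : ℕ, (((j + k : ℕ) : ℝ) + 1) * εs (j + k)) := by
    intro j
    exact mul_nonneg (by positivity) (htail_nonneg j)
  have hgeo1 : Summable (fun j : ℕ => (ε * (1-c)⁻¹) * c ^ (j+1)) := by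
    have : Summable (fun j : ℕ => ((ε * (1-c)⁻¹) * c) * c ^ j) := hgeo.mul_left _
    refine this.congr (fun j => ?_)
    ring
  have hsummable_outer : Summable (fun j : ℕ =>
      (famR F (n j) : ℝ) * ∑' k : ℕ, (((j + k : ℕ) : ℝ) + 1) * εs (j + k)) :=
    Summable.of_nonneg_of_le houter_nonneg houter_le hgeo1
  have hsummable1 : Summable (fun i : ℕ => ((i : ℝ) + 1) * εs i) := by
    refine Summable.of_nonneg_of_le (fun i => ?_) (fun i => ?_)
      (hgeo1.congr (fun j => rfl) |>.congr (fun j => rfl))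
    · have := hεpos i
      positivity
    · rw [keyb i]
      calc ε * c ^ (i+1) / ((Qf i : ℝ)+1) ≤ ε * c ^ (i+1) / 1 := by
            apply div_le_div_of_nonneg_left _ one_pos _
            · positivity
            · have : (0:ℝ) ≤ (Qf i : ℝ) := by positivity
              linarith
        _ = ε * c ^ (i+1) := div_one _
        _ ≤ (ε * (1-c)⁻¹) * c ^ (i+1) := by
            apply mul_le_mul_of_nonneg_right _ (by positivity)
            have h34 : (1:ℝ) ≤ (1-c)⁻¹ := by
              rw [le_inv_comm₀]
              · linarith
              · norm_num
              · rw [hc]; norm_num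
            nlinarith
  have hfinal : (∑' j : ℕ,
      (famR F (n j) : ℝ) * ∑' k : ℕ, (((j + k : ℕ) : ℝ) + 1) * εs (j + k)) < ε := by
    have h1 : (∑' j : ℕ,
        (famR F (n j) : ℝ) * ∑' k : ℕ, (((j + k : ℕ) : ℝ) + 1) * εs (j + k)) ≤
        ∑' j : ℕ, (ε * (1-c)⁻¹) * c ^ (j+1) :=
      Summable.tsum_le_tsum houter_le hsummable_outer hgeo1
    have h2 : (∑' j : ℕ, (ε * (1-c)⁻¹) * c ^ (j+1)) = (ε * (1-c)⁻¹) * c * (1-c)⁻¹ := by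
      calc (∑' j : ℕ, (ε * (1-c)⁻¹) * c ^ (j+1))
          = ∑' j : ℕ, ((ε * (1-c)⁻¹) * c) * c ^ j := by
            refine tsum_congr (fun j => ?_)
            ring
        _ = ((ε * (1-c)⁻¹) * c) * ∑' j : ℕ, c ^ j := tsum_mul_left
        _ = (ε * (1-c)⁻¹) * c * (1-c)⁻¹ := by
            rw [tsum_geometric_of_lt_one hc0.le hc1]
    rw [h2] at h1
    have : (ε * (1-c)⁻¹) * c * (1-c)⁻¹ = ε * (4/9 : ℝ) := by
      rw [hc]; norm_num
      ring
    rw [this] at h1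
    linarith
  exact ⟨n, hnmono, εs, hεpos, hεdec, hcondi, hsummable1, hsummable_outer, hfinal⟩
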